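/- If (A, μ, α) is a Hom-associative algebra, then A with the commutator bracket [a,b] = a·b − b·a and the same twisting map α is a Hom-Lie algebra. -/
import Mathlib


/-- A bilinear map, as a predicate on plain two-argument functions. -/
def IsBilin (K : Type*) {M N P : Type*} [Field K] [AddCommGroup M] [Module K M]
    [AddCommGroup N] [Module K N] [AddCommGroup P] [Module K P]
    (b : M → N → P) : Prop :=
  (∀ x, IsLinearMap K (b x)) ∧ (∀ y, IsLinearMap K fun x => b x y)

/-- A Hom-Lie algebra structure: bilinear skew-symmetric bracket `b` and a linear
twisting map `α` satisfying multiplicativity and the Hom-Jacobi identity. -/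
def IsHomLie (K : Type*) {g : Type*} [Field K] [AddCommGroup g] [Module K g]
    (b : g → g → g) (α : g → g) : Prop :=
  IsBilin K b ∧ IsLinearMap K α ∧
  (∀ x y, b x y = - b y x) ∧
  (∀ x y, α (b x y) = b (α x) (α y)) ∧
  (∀ x y z, b (b x y) (α z) + b (b y z) (α x) + b (b z x) (α y) = 0)

/-- A compatible Hom-Lie algebra: both brackets and every linear combination of
them are Hom-Lie brackets with the same twisting map `α`. -/
def IsCompatHomLie (K : Type*) {g : Type*} [Field K] [AddCommGroup g] [Module K g]
    (b₁ b₂ : g → g → g) (α : g → g) : Prop :=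
  IsHomLie K b₁ α ∧ IsHomLie K b₂ α ∧
  ∀ l m : K, IsHomLie K (fun x y => l • b₁ x y + m • b₂ x y) α

/-- A Hom-associative algebra gives a Hom-Lie algebra via the commutator bracket. -/
theorem stmt2 {K A : Type*} [Field K] [AddCommGroup A] [Module K A]
    (μ : A → A → A) (α : A → A)
    (hμ : IsBilin K μ) (hα : IsLinearMap K α)
    (hmult : ∀ a b, α (μ a b) = μ (α a) (α b))
    (hassoc : ∀ a b c, μ (μ a b) (α c) = μ (α a) (μ b c)) :
    IsHomLie K (fun a b => μ a b - μ b a) α := by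
  obtain ⟨hL, hR⟩ := hμ
  refine ⟨⟨fun x => ⟨fun a b => ?_, fun c a => ?_⟩, fun y => ⟨fun a b => ?_, fun c a => ?_⟩⟩,
    hα, fun x y => by dsimp only; abel, fun x y => ?_, fun x y z => ?_⟩
  · dsimp only; rw [(hL x).map_add, (hR x).map_add]; abel
  · dsimp only; rw [(hL x).map_smul, (hR x).map_smul, smul_sub]
  · dsimp only; rw [(hR y).map_add, (hL y).map_add]; abel
  · dsimp only; rw [(hR y).map_smul, (hL y).map_smul, smul_sub]
  · dsimp only; rw [hα.map_sub, hmult, hmult]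
  · dsimp only
    simp only [(hR _).map_sub, (hL _).map_sub]
    rw [hassoc x y z, hassoc y x z, hassoc y z x, hassoc z y x, hassoc z x y, hassoc x z y]
    abel
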